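/- A list-based order dependency X ↦ Y holds in r if and only if both X ↦ XY and X ~ Y hold in r, where XY denotes list concatenation and X ~ Y means XY ↦ YX. -/

import Mathlib

/-- Lexicographic preorder on tuples induced by a list of attributes. -/
def lexLE {α V : Type*} [LinearOrder V] : List α → (α → V) → (α → V) → Prop
  | [], _, _ => True
  | A :: X, s, t => s A < t A ∨ (s A = t A ∧ lexLE X s t)

/-- The list-based OD `X ↦ Y` holds in `r`. -/
def listOD {α V : Type*} [LinearOrder V] (r : Set (α → V)) (X Y : List α) : Prop :=
  ∀ s ∈ r, ∀ t ∈ r, lexLE X s t → lexLE Y s t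

def strictL {α V : Type*} [LinearOrder V] : List α → (α → V) → (α → V) → Prop
  | [], _, _ => False
  | A :: X, s, t => s A < t A ∨ (s A = t A ∧ strictL X s t)

def eqOnL {α V : Type*} (X : List α) (s t : α → V) : Prop := ∀ a ∈ X, s a = t a

lemma lex_iff {α V : Type*} [LinearOrder V] (X : List α) (s t : α → V) :
    lexLE X s t ↔ strictL X s t ∨ eqOnL X s t := by
  induction X with
  | nil => simp [lexLE, strictL, eqOnL]
  | cons A X ih =>
    simp only [lexLE, strictL, eqOnL, List.mem_cons, forall_eq_or_imp]
    rw [ih]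
    unfold eqOnL
    tauto

lemma eqOnL_lex {α V : Type*} [LinearOrder V] {X : List α} {s t : α → V}
    (h : eqOnL X s t) : lexLE X s t := (lex_iff X s t).2 (Or.inr h)

lemma strictL_lex {α V : Type*} [LinearOrder V] {X : List α} {s t : α → V}
    (h : strictL X s t) : lexLE X s t := (lex_iff X s t).2 (Or.inl h)

lemma lex_append {α V : Type*} [LinearOrder V] (X Y : List α) (s t : α → V) :
    lexLE (X ++ Y) s t ↔ strictL X s t ∨ (eqOnL X s t ∧ lexLE Y s t) := by
  induction X with
  | nil => simp [strictL, eqOnL]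
  | cons A X ih =>
    simp only [List.cons_append, lexLE, strictL, eqOnL, List.mem_cons, forall_eq_or_imp]
    rw [ih]
    unfold eqOnL
    tauto

theorem stmt12 {α V : Type*} [LinearOrder V] (r : Set (α → V)) (hfin : r.Finite)
    (X Y : List α) :
    listOD r X Y ↔ listOD r X (X ++ Y) ∧ listOD r (X ++ Y) (Y ++ X) := by
  constructor
  · intro h
    constructor
    · intro s hs t ht hX
      rw [lex_append]
      rcases (lex_iff X s t).1 hX with hst | heq
      · exact Or.inl hst
      · exact Or.inr ⟨heq, h s hs t ht hX⟩
    · intro s hs t ht hXY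
      rw [lex_append] at hXY
      rw [lex_append]
      rcases hXY with hst | ⟨heq, hY⟩
      · have hX : lexLE X s t := strictL_lex hst
        have hY : lexLE Y s t := h s hs t ht hX
        rcases (lex_iff Y s t).1 hY with hY' | hY'
        · exact Or.inl hY'
        · exact Or.inr ⟨hY', hX⟩
      · rcases (lex_iff Y s t).1 hY with hY' | hY'
        · exact Or.inl hY'
        · exact Or.inr ⟨hY', eqOnL_lex heq⟩
  · rintro ⟨h1, h2⟩ s hs t ht hX
    have hXY := h1 s hs t ht hX
    have hYX := h2 s hs t ht hXY
    rw [lex_append] at hYX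
    rcases hYX with hst | ⟨heq, _⟩
    · exact strictL_lex hst
    · exact eqOnL_lex heq
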